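/- Let $\Theta$ be a $p\times p$ positive definite matrix partitioned by disjoint sets $A,B,C$ covering $\{1,\dots,p\}$, with $\Sigma = \Theta^{-1}$. Define $O = ((A\cup B)\times(A\cup B)) \cup ((B\cup C)\times(B\cup C))$, i.e. $O^c = (A\times C)\cup(C\times A)$. Let $\tilde\Theta$ be the unique positive definite matrix with $\tilde\Theta_{AC} = 0$ and $[\tilde\Theta^{-1}]_{O} = \Sigma_O$ (the maximum-determinant completion). Then $\tilde\Theta_{AA} = \Theta_{AA} - \Theta_{AC}\Theta_{CC}^{-1}\Theta_{CA}$, $\tilde\Theta_{AB} = \Theta_{AB} - \Theta_{AC}\Theta_{CC}^{-1}\Theta_{CB}$, $\tilde\Theta_{BC} = \Theta_{BC} - \Theta_{BA}\Theta_{AA}^{-1}\Theta_{AC}$, and $\tilde\Theta_{CC} = \Theta_{CC} - \Theta_{CA}\Theta_{AA}^{-1}\Theta_{AC}$. -/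

import Mathlib

open Matrix

/-- The submatrix of a `p×p` matrix with rows indexed by `E` and columns by `F`. -/
def msub {p : ℕ} (M : Matrix (Fin p) (Fin p) ℝ) (E F : Finset (Fin p)) :
    Matrix ↥E ↥F ℝ :=
  M.submatrix (fun i => (i : Fin p)) (fun j => (j : Fin p))

lemma msub_one_eq {p : ℕ} (E : Finset (Fin p)) :
    msub (1 : Matrix (Fin p) (Fin p) ℝ) E E = 1 := by
  ext i j
  simp only [msub, Matrix.submatrix_apply, Matrix.one_apply, Subtype.ext_iff]

lemma msub_one_disj {p : ℕ} (E F : Finset (Fin p)) (hd : Disjoint E F) :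
    msub (1 : Matrix (Fin p) (Fin p) ℝ) E F = 0 := by
  ext i j
  simp only [msub, Matrix.submatrix_apply, Matrix.one_apply, Matrix.zero_apply,
    ite_eq_right_iff]
  intro h
  exact absurd (h ▸ i.2) (Finset.disjoint_right.mp hd j.2)

lemma msub_mul {p : ℕ} (M N : Matrix (Fin p) (Fin p) ℝ) (E F G H : Finset (Fin p))
    (hd : Disjoint E F) (hu : E ∪ F = Finset.univ) :
    msub (M * N) G H = msub M G E * msub N E H + msub M G F * msub N F H := by
  ext i j
  simp only [msub, Matrix.submatrix_apply, Matrix.mul_apply, Matrix.add_apply]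
  rw [Finset.sum_coe_sort E (fun k => M (i : Fin p) k * N k (j : Fin p)),
    Finset.sum_coe_sort F (fun k => M (i : Fin p) k * N k (j : Fin p)),
    ← Finset.sum_union hd, hu]

lemma posDef_msub {p : ℕ} (M : Matrix (Fin p) (Fin p) ℝ) (hM : M.PosDef)
    (E : Finset (Fin p)) : (msub M E E).PosDef := by
  refine Matrix.PosDef.of_dotProduct_mulVec_pos (hM.1.submatrix _) fun x hx => ?_
  classical
  set y : Fin p → ℝ := fun i => if h : i ∈ E then x ⟨i, h⟩ else 0 with hy
  have hyne : y ≠ 0 := by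
    intro h
    apply hx
    ext k
    have := congrFun h (k : Fin p)
    simpa [hy, k.2] using this
  have h1 : ∀ i : Fin p, ∑ j, M i j * y j = ∑ j : ↥E, M i (j : Fin p) * x j := by
    intro i
    rw [← Finset.sum_subset (Finset.subset_univ E)
        (fun j _ hj => by simp [hy, hj]),
      ← Finset.sum_coe_sort E (fun j => M i j * y j)]
    exact Finset.sum_congr rfl fun j _ => by simp [hy, j.2]
  have key : dotProduct (star x) (msub M E E *ᵥ x) = dotProduct (star y) (M *ᵥ y) := by
    simp only [dotProduct, mulVec, Pi.star_apply, star_trivial, msub,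
      Matrix.submatrix_apply]
    rw [← Finset.sum_subset (Finset.subset_univ E)
        (fun i _ hi => by simp [hy, hi]),
      ← Finset.sum_coe_sort E (fun i => y i * ∑ j, M i j * y j)]
    refine Finset.sum_congr rfl fun i _ => ?_
    rw [h1]
    simp [hy, i.2]
  rw [key]
  exact hM.dotProduct_mulVec_pos hyne

lemma schur_eq {p : ℕ} (M : Matrix (Fin p) (Fin p) ℝ) (hM : M.PosDef)
    (E F : Finset (Fin p)) (hd : Disjoint E F) (hu : E ∪ F = Finset.univ) :
    msub M E E - msub M E F * (msub M F F)⁻¹ * msub M F E = (msub M⁻¹ E E)⁻¹ := by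
  have hS : (M⁻¹).PosDef := hM.inv
  have hFF : (msub M F F).PosDef := posDef_msub M hM F
  have hSEE : (msub M⁻¹ E E).PosDef := posDef_msub _ hS E
  have hMS : M * M⁻¹ = 1 := Matrix.mul_nonsing_inv M hM.det_pos.ne'.isUnit
  have h1 : msub M E E * msub M⁻¹ E E + msub M E F * msub M⁻¹ F E = 1 := by
    rw [← msub_mul M M⁻¹ E F E E hd hu, hMS, msub_one_eq]
  have h2 : msub M F E * msub M⁻¹ E E + msub M F F * msub M⁻¹ F E = 0 := by
    rw [← msub_mul M M⁻¹ E F F E hd hu, hMS, msub_one_disj F E hd.symm]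
  have h3 : (msub M F F)⁻¹ * (msub M F E * msub M⁻¹ E E) + msub M⁻¹ F E = 0 := by
    have h := congrArg (fun Z => (msub M F F)⁻¹ * Z) h2
    simpa [Matrix.mul_add, ← Matrix.mul_assoc,
      Matrix.nonsing_inv_mul _ hFF.det_pos.ne'.isUnit] using h
  have hSFE : msub M⁻¹ F E = -((msub M F F)⁻¹ * (msub M F E * msub M⁻¹ E E)) :=
    eq_neg_of_add_eq_zero_right h3
  have h4 : (msub M E E - msub M E F * (msub M F F)⁻¹ * msub M F E) * msub M⁻¹ E E = 1 := by
    rw [hSFE] at h1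
    rw [← h1]
    simp only [Matrix.sub_mul, Matrix.add_mul, Matrix.neg_mul, Matrix.mul_neg, Matrix.mul_assoc, sub_eq_add_neg]
  exact (Matrix.inv_eq_left_inv h4).symm

theorem madgq_blocks (p : ℕ) (Θ Θ' : Matrix (Fin p) (Fin p) ℝ)
    (hΘ : Θ.PosDef) (hΘ' : Θ'.PosDef) (A B C : Finset (Fin p))
    (hAB : Disjoint A B) (hAC : Disjoint A C) (hBC : Disjoint B C)
    (hcover : A ∪ B ∪ C = Finset.univ)
    (hz1 : ∀ i ∈ A, ∀ j ∈ C, Θ' i j = 0)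
    (hz2 : ∀ i ∈ C, ∀ j ∈ A, Θ' i j = 0)
    (hagree : ∀ i j : Fin p, ¬((i ∈ A ∧ j ∈ C) ∨ (i ∈ C ∧ j ∈ A)) →
      Θ'⁻¹ i j = Θ⁻¹ i j) :
    msub Θ' A A = msub Θ A A - msub Θ A C * (msub Θ C C)⁻¹ * msub Θ C A ∧
    msub Θ' A B = msub Θ A B - msub Θ A C * (msub Θ C C)⁻¹ * msub Θ C B ∧
    msub Θ' B C = msub Θ B C - msub Θ B A * (msub Θ A A)⁻¹ * msub Θ A C ∧
    msub Θ' C C = msub Θ C C - msub Θ C A * (msub Θ A A)⁻¹ * msub Θ A C := by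
  have hd1 : Disjoint (A ∪ B) C := Finset.disjoint_union_left.mpr ⟨hAC, hBC⟩
  have hu1 : (A ∪ B) ∪ C = Finset.univ := hcover
  have hd2 : Disjoint (B ∪ C) A :=
    (Finset.disjoint_union_right.mpr ⟨hAB, hAC⟩).symm
  have hu2 : (B ∪ C) ∪ A = Finset.univ := by
    rw [Finset.union_comm, ← Finset.union_assoc]
    exact hcover
  have hs1 : msub Θ'⁻¹ (A ∪ B) (A ∪ B) = msub Θ⁻¹ (A ∪ B) (A ∪ B) := by
    ext i j
    refine hagree _ _ ?_
    rintro (⟨-, hjC⟩ | ⟨hiC, -⟩)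
    · exact Finset.disjoint_left.mp hd1 j.2 hjC
    · exact Finset.disjoint_left.mp hd1 i.2 hiC
  have hs2 : msub Θ'⁻¹ (B ∪ C) (B ∪ C) = msub Θ⁻¹ (B ∪ C) (B ∪ C) := by
    ext i j
    refine hagree _ _ ?_
    rintro (⟨hiA, -⟩ | ⟨-, hjA⟩)
    · exact Finset.disjoint_left.mp hd2 i.2 hiA
    · exact Finset.disjoint_left.mp hd2 j.2 hjA
  have star1 :
      msub Θ' (A ∪ B) (A ∪ B) - msub Θ' (A ∪ B) C * (msub Θ' C C)⁻¹ * msub Θ' C (A ∪ B)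
        = msub Θ (A ∪ B) (A ∪ B) - msub Θ (A ∪ B) C * (msub Θ C C)⁻¹ * msub Θ C (A ∪ B) := by
    rw [schur_eq Θ' hΘ' (A ∪ B) C hd1 hu1, schur_eq Θ hΘ (A ∪ B) C hd1 hu1, hs1]
  have star2 :
      msub Θ' (B ∪ C) (B ∪ C) - msub Θ' (B ∪ C) A * (msub Θ' A A)⁻¹ * msub Θ' A (B ∪ C)
        = msub Θ (B ∪ C) (B ∪ C) - msub Θ (B ∪ C) A * (msub Θ A A)⁻¹ * msub Θ A (B ∪ C) := by
    rw [schur_eq Θ' hΘ' (B ∪ C) A hd2 hu2, schur_eq Θ hΘ (B ∪ C) A hd2 hu2, hs2]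
  refine ⟨?_, ?_, ?_, ?_⟩
  · ext ⟨i, hi⟩ ⟨j, hj⟩
    have key := congrFun (congrFun star1 ⟨i, Finset.mem_union_left B hi⟩)
      ⟨j, Finset.mem_union_left B hj⟩
    simp only [Matrix.sub_apply, Matrix.mul_apply, msub, Matrix.submatrix_apply] at key ⊢
    have hz : ∀ l : Fin p, l ∈ C → Θ' i l = 0 := hz1 i hi
    simp only [hz _ (Finset.coe_mem _), zero_mul, Finset.sum_const_zero, sub_zero] at key
    rw [key]
  · ext ⟨i, hi⟩ ⟨j, hj⟩
    have key := congrFun (congrFun star1 ⟨i, Finset.mem_union_left B hi⟩)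
      ⟨j, Finset.mem_union_right A hj⟩
    simp only [Matrix.sub_apply, Matrix.mul_apply, msub, Matrix.submatrix_apply] at key ⊢
    have hz : ∀ l : Fin p, l ∈ C → Θ' i l = 0 := hz1 i hi
    simp only [hz _ (Finset.coe_mem _), zero_mul, Finset.sum_const_zero, sub_zero] at key
    rw [key]
  · ext ⟨i, hi⟩ ⟨j, hj⟩
    have key := congrFun (congrFun star2 ⟨i, Finset.mem_union_left C hi⟩)
      ⟨j, Finset.mem_union_right B hj⟩
    simp only [Matrix.sub_apply, Matrix.mul_apply, msub, Matrix.submatrix_apply] at key ⊢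
    have hz : ∀ k : Fin p, k ∈ A → Θ' k j = 0 := fun k hk => hz1 k hk j hj
    simp only [hz _ (Finset.coe_mem _), mul_zero, Finset.sum_const_zero, sub_zero] at key
    rw [key]
  · ext ⟨i, hi⟩ ⟨j, hj⟩
    have key := congrFun (congrFun star2 ⟨i, Finset.mem_union_right B hi⟩)
      ⟨j, Finset.mem_union_right B hj⟩
    simp only [Matrix.sub_apply, Matrix.mul_apply, msub, Matrix.submatrix_apply] at key ⊢
    have hz : ∀ l : Fin p, l ∈ A → Θ' i l = 0 := hz2 i hi
    simp only [hz _ (Finset.coe_mem _), zero_mul, Finset.sum_const_zero, sub_zero] at key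
    rw [key]
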